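/- Let q be a power of two. If f is an o-polynomial of F_q of degree 6, then f is equivalent to x^6. -/

import Mathlib

open Polynomial

/-- An o-polynomial of a finite field `F`: a polynomial of degree at most `|F| - 1`
inducing a permutation of `F` with `f(0) = 0`, `f(1) = 1`, such that no three points
of the graph of `f` are collinear. -/
def IsOPoly (F : Type*) [Field F] [Finite F] (f : F[X]) : Prop :=
  f.natDegree ≤ Nat.card F - 1 ∧
  Function.Bijective (fun x : F => f.eval x) ∧
  f.eval 0 = 0 ∧ f.eval 1 = 1 ∧
  ∀ a b c : F, a ≠ b → a ≠ c → b ≠ c →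
    Matrix.det !![1, 1, 1; a, b, c; f.eval a, f.eval b, f.eval c] ≠ 0

/-- Two polynomials `f`, `g` are equivalent if
`g(x) = (f(x+a) + f(a)) / (f(1+a) + f(a))` for some `a ∈ F`. -/
def OEquiv (F : Type*) [Field F] (f g : F[X]) : Prop :=
  ∃ a : F, g = Polynomial.C (f.eval (1 + a) + f.eval a)⁻¹ *
    (f.comp (Polynomial.X + Polynomial.C a) + Polynomial.C (f.eval a))

/-- Every o-polynomial of degree `6` is equivalent to `x^6`. -/
theorem opoly_degree_six (F : Type*) [Field F] [Finite F] (h : ℕ) (hh : 0 < h)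
    (hq : Nat.card F = 2 ^ h) (f : F[X]) (hf : IsOPoly F f)
    (hdeg : f.natDegree = 6) :
    OEquiv F f (X ^ 6) := by
  classical
  cases nonempty_fintype F
  obtain ⟨hdle, hbij, h0, h1, hcol⟩ := hf
  have hcard : Fintype.card F = 2 ^ h := by rw [← Nat.card_eq_fintype_card]; exact hq
  have h2 : (2 : F) = 0 := by
    have hz := FiniteField.cast_card_eq_zero F
    rw [hcard] at hz
    push_cast at hz
    exact pow_eq_zero_iff hh.ne' |>.mp hz
  have hsq : ∀ y : F, ∃ x : F, x ^ 2 = y := by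
    have hinj : Function.Injective (fun x : F => x ^ 2) := by
      intro x y hxy
      simp only at hxy
      have hx : (x + y) ^ 2 = 0 := by linear_combination hxy + (x * y + y ^ 2) * h2
      have := pow_eq_zero_iff (n := 2) (by norm_num) |>.mp hx
      linear_combination this - y * h2
    exact Finite.injective_iff_surjective.mp hinj
  have hcard7 : 7 ≤ Fintype.card F := by
    rw [← Nat.card_eq_fintype_card]
    have h1c : 1 ≤ Nat.card F := Nat.card_pos
    omega
  have hcard8 : 8 ≤ Fintype.card F := by
    rw [hcard] at hcard7 ⊢
    rcases Nat.lt_or_ge h 3 with hl | hl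
    · interval_cases h <;> omega
    · calc (8:ℕ) = 2 ^ 3 := rfl
        _ ≤ 2 ^ h := Nat.pow_le_pow_right (by norm_num) hl
  -- Step A: derivative vanishes everywhere
  have hder : ∀ a : F, f.derivative.eval a = 0 := by
    intro a
    set p := f.comp (X + C a) + C (f.eval a) with hp
    have hev : ∀ x : F, p.eval x = f.eval (x + a) + f.eval a := by
      intro x; simp [hp]
    have hp0 : p.coeff 0 = 0 := by
      rw [coeff_zero_eq_eval_zero, hev 0]
      rw [zero_add]
      linear_combination f.eval a * h2
    set φ := p.divX with hφ
    have hpXφ : p = X * φ := by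
      conv_lhs => rw [← X_mul_divX_add p]
      rw [hp0, map_zero, add_zero]
    have hevφ : ∀ x : F, x * φ.eval x = f.eval (x + a) + f.eval a := by
      intro x
      rw [← hev x, hpXφ]
      simp [mul_comm]
    have hφne : ∀ x : F, x ≠ 0 → φ.eval x ≠ 0 := by
      intro x hx hc
      have h5 := hevφ x
      rw [hc, mul_zero] at h5
      have : f.eval (x + a) = f.eval a := by linear_combination -h5 - f.eval a * h2
      have := hbij.1 this
      exact hx (by simpa using this)
    have hφinj : ∀ x ∈ (Finset.univ.erase (0:F)), ∀ y ∈ (Finset.univ.erase (0:F)),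
        φ.eval x = φ.eval y → x = y := by
      intro x hx y hy heq
      by_contra hxy
      have hxne : x ≠ 0 := Finset.ne_of_mem_erase hx
      have hyne : y ≠ 0 := Finset.ne_of_mem_erase hy
      have hd := hcol a (x + a) (y + a) (by simp [hxne, eq_comm])
        (by simp [hyne, eq_comm]) (by simpa using hxy)
      apply hd
      simp [Matrix.det_fin_three]
      linear_combination y * hevφ x - x * hevφ y - x * y * heq + (y - x) * f.eval a * h2
    have hdegp : p.natDegree ≤ 6 := by
      apply le_trans (natDegree_add_le _ _)
      simp only [natDegree_C, le_refl, max_le_iff]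
      constructor
      · calc (f.comp (X + C a)).natDegree ≤ f.natDegree * (X + C a).natDegree :=
              natDegree_comp_le
          _ ≤ 6 := by
              rw [hdeg]
              have : (X + C a).natDegree ≤ 1 := by
                apply le_trans (natDegree_add_le _ _); simp
              omega
      · omega
    have hdegφ : φ.natDegree < 6 := by
      have h9 := natDegree_divX_le (p := p)
      have h8 : φ.natDegree = p.natDegree - 1 := natDegree_divX_eq_natDegree_tsub_one
      by_cases hpz : p.natDegree = 0
      · omega
      · omega
    have hsumuniv : ∑ x : F, φ.eval x = 0 := by
      rw [Finset.sum_congr rfl (fun x _ => eval_eq_sum_range' hdegφ x)]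
      rw [Finset.sum_comm]
      apply Finset.sum_eq_zero
      intro i hi
      rw [← Finset.mul_sum]
      have hilt : i < Fintype.card F - 1 := by
        simp only [Finset.mem_range] at hi; omega
      rw [FiniteField.sum_pow_lt_card_sub_one (K := F) i hilt, mul_zero]
    have hsumid : ∑ x : F, x = 0 := by
      have := FiniteField.sum_pow_lt_card_sub_one (K := F) 1 (by omega)
      simpa using this
    have himg : (Finset.univ.erase (0:F)).image (fun x => φ.eval x)
        = Finset.univ.erase (0:F) := by
      apply Finset.eq_of_subset_of_card_le
      · intro y hy
        simp only [Finset.mem_image] at hy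
        obtain ⟨x, hx, rfl⟩ := hy
        exact Finset.mem_erase.mpr ⟨hφne x (Finset.ne_of_mem_erase hx), Finset.mem_univ _⟩
      · exact ge_of_eq (Finset.card_image_of_injOn hφinj)
    have hsumerase : ∑ x ∈ Finset.univ.erase (0:F), φ.eval x = 0 := by
      have e1 := Finset.sum_image (f := fun y : F => y)
        (s := Finset.univ.erase (0:F)) (g := fun x => φ.eval x) hφinj
      rw [himg] at e1
      rw [← e1, Finset.sum_erase (f := fun y : F => y) (a := (0:F)) Finset.univ rfl]
      exact hsumid
    have hφ0 : φ.eval 0 = 0 := by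
      have h3 := Finset.add_sum_erase Finset.univ (fun x => φ.eval x) (Finset.mem_univ (0:F))
      rw [hsumerase, add_zero, hsumuniv] at h3
      exact h3
    rw [← taylor_coeff_one (r := a) (f := f)]
    have hc1 : p.coeff 1 = 0 := by
      rw [← coeff_divX (n := 0), coeff_zero_eq_eval_zero]
      exact hφ0
    rw [taylor_apply]
    have : (f.comp (X + C a)).coeff 1 = p.coeff 1 := by
      rw [hp, coeff_add, coeff_C]
      norm_num
    rw [this, hc1]
  have hdz : f.derivative = 0 := by
    apply Polynomial.eq_zero_of_natDegree_lt_card_of_eval_eq_zero f.derivative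
      Function.injective_id (fun x => hder x)
    calc f.derivative.natDegree ≤ f.natDegree - 1 := natDegree_derivative_le f
      _ < Fintype.card F := by omega
  have c0 : f.coeff 0 = 0 := by rwa [coeff_zero_eq_eval_zero]
  have hco : ∀ n : ℕ, f.coeff (n + 1) * ((n : F) + 1) = 0 := by
    intro n; rw [← coeff_derivative, hdz, coeff_zero]
  have c1 : f.coeff 1 = 0 := by have h5 := hco 0; push_cast at h5; linear_combination h5
  have c3 : f.coeff 3 = 0 := by
    have h5 := hco 2; push_cast at h5; linear_combination h5 - f.coeff 3 * h2
  have c5 : f.coeff 5 = 0 := by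
    have h5 := hco 4; push_cast at h5; linear_combination h5 - 2 * f.coeff 5 * h2
  have hw : f.coeff 6 ≠ 0 := by
    intro hc
    have hfne : f ≠ 0 := by intro hz; rw [hz] at hdeg; simp at hdeg
    exact hfne (leadingCoeff_eq_zero.mp (by rw [leadingCoeff, hdeg]; exact hc))
  set u := f.coeff 2 with hu'
  set v := f.coeff 4 with hv'
  set w := f.coeff 6 with hw'
  have hfe : f = C u * X ^ 2 + C v * X ^ 4 + C w * X ^ 6 := by
    ext n
    simp only [coeff_add, coeff_C_mul, coeff_X_pow]
    match n with
    | 0 => simp [c0]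
    | 1 => simp [c1]
    | 2 => simp [hu']
    | 3 => simp [c3]
    | 4 => simp [hv']
    | 5 => simp [c5]
    | 6 => simp [hw']
    | (n + 7) => rw [coeff_eq_zero_of_natDegree_lt (by omega)]; simp
  have heval : ∀ t : F, f.eval t = u * t ^ 2 + v * t ^ 4 + w * t ^ 6 := by
    intro t; conv_lhs => rw [hfe]
    simp
  obtain ⟨r, hr⟩ := hsq (u / w)
  obtain ⟨a, ha⟩ := hsq r
  have hu4 : w * a ^ 4 = u := by
    have h5 : a ^ 4 = u / w := by rw [show a ^ 4 = (a ^ 2) ^ 2 by ring, ha, hr]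
    rw [h5]; field_simp
  have hv2 : v = w * a ^ 2 := by
    by_contra hvne
    have hBne : v + w * a ^ 2 ≠ 0 := by
      intro hB; exact hvne (by linear_combination hB - a ^ 2 * w * h2)
    obtain ⟨x0, hx0⟩ := hsq ((v + w * a ^ 2) / w)
    have hx0w : w * x0 ^ 2 = v + w * a ^ 2 := by rw [hx0]; field_simp
    have hx0ne : x0 ≠ 0 := by
      intro hz; rw [hz] at hx0w; simp at hx0w
      exact hBne (by linear_combination -hx0w)
    have hfeq : f.eval (x0 + a) = f.eval a := by
      rw [heval, heval]
      linear_combination (-((x0 + a) ^ 2 - a ^ 2)) * hu4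
        + (-((x0 + a) ^ 4 - a ^ 4)) * hx0w
        + (w * (x0 ^ 6 + 5 * a * x0 ^ 5 + 10 * a ^ 2 * x0 ^ 4 + 10 * a ^ 3 * x0 ^ 3
            + 5 * a ^ 4 * x0 ^ 2 + 2 * a ^ 5 * x0)) * h2
    have h6 := hbij.1 hfeq
    exact hx0ne (by simpa using h6)
  have heva : f.eval a = w * a ^ 6 := by
    rw [heval]
    linear_combination (-(a ^ 2)) * hu4 + a ^ 4 * hv2 + w * a ^ 6 * h2
  have hsum1 : f.eval (1 + a) + f.eval a = w := by
    rw [heval, heval]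
    linear_combination (-((1 + a) ^ 2 + a ^ 2)) * hu4 + ((1 + a) ^ 4 + a ^ 4) * hv2
      + w * (3 * a + 8 * a ^ 2 + 12 * a ^ 3 + 11 * a ^ 4 + 6 * a ^ 5 + 3 * a ^ 6) * h2
  have h2X : (2 : F[X]) = 0 := by
    rw [← map_ofNat (C : F →+* F[X]) 2, show (OfNat.ofNat 2 : F) = 0 from h2, map_zero]
  have hcomp : f.comp (X + C a) + C (f.eval a) = C w * X ^ 6 := by
    rw [heva]
    conv_lhs => rw [hfe]
    rw [show u = w * a ^ 4 from hu4.symm, hv2]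
    simp only [add_comp, mul_comp, pow_comp, X_comp, C_comp, map_mul, map_pow]
    linear_combination (C w * (3 * C a * X ^ 5 + 8 * (C a) ^ 2 * X ^ 4
      + 12 * (C a) ^ 3 * X ^ 3 + 11 * (C a) ^ 4 * X ^ 2 + 6 * (C a) ^ 5 * X
      + 2 * (C a) ^ 6)) * h2X
  refine ⟨a, ?_⟩
  rw [hsum1, hcomp, ← mul_assoc, ← map_mul, inv_mul_cancel₀ hw, map_one, one_mul]
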